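/- Let 𝒢 be a graph covering with inverse limit (X, f). Suppose x = (v₀, v₁, v₂, ...) ∈ X is such that for all sufficiently large n, every two edges of Gₙ into vₙ have the same φₙ-image of their sources and every two edges out of vₙ have the same φₙ-image of their targets (vₙ is a bidirectional vertex). Then x has a unique preimage under f. -/

import Mathlib

/-- A graph covering `G₀ ←φ₁ G₁ ←φ₂ G₂ ← ⋯` : a sequence of finite directed graphs
with surjective edge relations, `G₀` the singleton graph, and +directional
edge-surjective bonding graph homomorphisms. -/
structure GraphCovering where
  /-- vertex sets -/
  V : ℕ → Type
  fin : ∀ n, Fintype (V n)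
  /-- edge relations -/
  E : ∀ n, V n → V n → Prop
  /-- `G₀` is a singleton graph -/
  singleV : ∀ a b : V 0, a = b
  /-- the edge relation is surjective: every vertex has an outgoing edge -/
  surjOut : ∀ n (v : V n), ∃ u, E n v u
  /-- every vertex has an incoming edge -/
  surjIn : ∀ n (v : V n), ∃ u, E n u v
  /-- the bonding maps -/
  φ : ∀ n, V (n + 1) → V n
  /-- the bonding maps are graph homomorphisms -/
  hom : ∀ n u v, E (n + 1) u v → E n (φ n u) (φ n v)
  /-- the bonding maps are +directional -/
  plusdir : ∀ n u v v', E (n + 1) u v → E (n + 1) u v' → φ n v = φ n v'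
  /-- the bonding maps are edge-surjective -/
  edgeSurj : ∀ n u v, E n u v → ∃ u' v', E (n + 1) u' v' ∧ φ n u' = u ∧ φ n v' = v

/-- The inverse limit `V_𝒢` of a graph covering. -/
def GraphCovering.limit (G : GraphCovering) : Type :=
  { x : ∀ n, G.V n // ∀ n, G.φ n (x (n + 1)) = x n }

/-- The relation `E_𝒢` on the inverse limit. -/
def GraphCovering.rel (G : GraphCovering) (x y : G.limit) : Prop :=
  ∀ n, G.E n (x.1 n) (y.1 n)

instance (G : GraphCovering) (n : ℕ) : TopologicalSpace (G.V n) := ⊥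
instance (G : GraphCovering) (n : ℕ) : DiscreteTopology (G.V n) := ⟨rfl⟩

instance (G : GraphCovering) : TopologicalSpace G.limit :=
  inferInstanceAs (TopologicalSpace { x : ∀ n, G.V n // ∀ n, G.φ n (x (n + 1)) = x n })

open CategoryTheory in
theorem unique_preimage_of_eventually_bidirectional_vertices (G : GraphCovering)
    (x : G.limit)
    (hbi : ∃ N : ℕ, ∀ n ≥ N,
      (∀ u u', G.E (n + 1) u (x.1 (n + 1)) → G.E (n + 1) u' (x.1 (n + 1)) →
        G.φ n u = G.φ n u') ∧
      (∀ w w', G.E (n + 1) (x.1 (n + 1)) w → G.E (n + 1) (x.1 (n + 1)) w' →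
        G.φ n w = G.φ n w')) :
    ∃! y : G.limit, G.rel y x := by
  classical
  obtain ⟨N, hN⟩ := hbi
  -- Existence via König's lemma (inverse limit of nonempty finite sets).
  let S : ℕ → Type := fun n => {u : G.V n // G.E n u (x.1 n)}
  let fm : ∀ n, S (n + 1) ⟶ S n := fun n => TypeCat.ofHom fun u =>
    ⟨G.φ n u.1, by
      have h := G.hom n u.1 (x.1 (n + 1)) u.2
      rwa [x.2 n] at h⟩
  let F : ℕᵒᵖ ⥤ Type := CategoryTheory.Functor.ofOpSequence fm
  haveI : ∀ j : ℕᵒᵖ, Finite (F.obj j) := fun j => by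
    haveI := G.fin j.unop
    exact inferInstanceAs (Finite (S j.unop))
  haveI : ∀ j : ℕᵒᵖ, Nonempty (F.obj j) := fun j => by
    obtain ⟨u, hu⟩ := G.surjIn j.unop (x.1 j.unop)
    exact ⟨(⟨u, hu⟩ : S j.unop)⟩
  obtain ⟨u, hu⟩ := nonempty_sections_of_finite_inverse_system F
  have key : ∀ n, fm n (u (Opposite.op (n + 1))) = u (Opposite.op n) := by
    intro n
    have h := hu ((CategoryTheory.homOfLE (Nat.le_add_right n 1)).op)
    rwa [show F.map (CategoryTheory.homOfLE (Nat.le_add_right n 1)).op = fm n from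
      CategoryTheory.Functor.ofOpSequence_map_homOfLE_succ fm n] at h
  refine ⟨⟨fun n => (u (Opposite.op n)).1, fun n => congrArg Subtype.val (key n)⟩,
    fun n => (u (Opposite.op n)).2, ?_⟩
  -- Uniqueness
  rintro y hy
  have huniq : ∀ (y y' : G.limit), G.rel y x → G.rel y' x → y = y' := by
    intro y y' hy hy'
    have hge : ∀ n, N ≤ n → y.1 n = y'.1 n := by
      intro n hn
      have h1 := (hN n hn).1 (y.1 (n + 1)) (y'.1 (n + 1)) (hy (n + 1)) (hy' (n + 1))
      rw [y.2 n, y'.2 n] at h1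
      exact h1
    have step : ∀ j n, y.1 (n + j) = y'.1 (n + j) → y.1 n = y'.1 n := by
      intro j
      induction j with
      | zero => exact fun n h => h
      | succ j ih =>
        intro n h
        apply ih
        have h' : y.1 ((n + j) + 1) = y'.1 ((n + j) + 1) := h
        have := congrArg (G.φ (n + j)) h'
        rwa [y.2 (n + j), y'.2 (n + j)] at this
    apply Subtype.ext
    funext n
    exact step N n (hge (n + N) (Nat.le_add_left N n))
  exact huniq y _ hy (fun n => (u (Opposite.op n)).2)
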